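/- Let n ≥ 1, let a₁, …, aₙ be positive reals, let s > 0 and N > 0. Then for all positive reals d₁, …, dₙ with Σ dᵢ = N one has Σ aᵢ dᵢ^{−s} ≥ N^{−s} (Σ aᵢ^{1/(s+1)})^{s+1}, and equality holds for dᵢ = N aᵢ^{1/(s+1)} / Σ_j a_j^{1/(s+1)}. In particular, with s = p + 1 and aₖ the local error contributions, the optimized total error satisfies E* = (α/N)^{(p+1)/2} (Σ_k ηₖ^{2/(p+2)})^{(p+2)/2}, where aₖ = ηₖ² α^{p+1} and ηₖ is the local energy error. -/

import Mathlib

open Finset Real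

/-- Discrete form of the continuous mesh optimization: for positive weights `aᵢ`,
the weighted sum `Σ aᵢ dᵢ^{−s}` over positive densities with `Σ dᵢ = N` is bounded
below by `N^{−s} (Σ aᵢ^{1/(s+1)})^{s+1}`, with equality for the optimal densities
`dᵢ = N aᵢ^{1/(s+1)} / Σⱼ aⱼ^{1/(s+1)}`.  In particular, with `s = p + 1`,
`α = 3√3/4` and local error contributions `aₖ = ηₖ² α^{p+1}`, the optimized total
error is `E* = (α/N)^{(p+1)/2} (Σₖ ηₖ^{2/(p+2)})^{(p+2)/2}`. -/
theorem discrete_mesh_optimization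
    (n : ℕ) (hn : 1 ≤ n) (a : Fin n → ℝ) (ha : ∀ i, 0 < a i)
    (s : ℝ) (hs : 0 < s) (N : ℝ) (hN : 0 < N) :
    (∀ d : Fin n → ℝ, (∀ i, 0 < d i) → (∑ i, d i = N) →
        N ^ (-s) * (∑ i, a i ^ (1 / (s + 1))) ^ (s + 1) ≤ ∑ i, a i * d i ^ (-s)) ∧
    (∀ d : Fin n → ℝ,
        (∀ i, d i = N * a i ^ (1 / (s + 1)) / ∑ j, a j ^ (1 / (s + 1))) →
        ∑ i, a i * d i ^ (-s) = N ^ (-s) * (∑ i, a i ^ (1 / (s + 1))) ^ (s + 1)) ∧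
    (∀ (p : ℕ) (η : Fin n → ℝ), (∀ k, 0 < η k) → s = (p : ℝ) + 1 →
        (∀ k, a k = η k ^ 2 * (3 * Real.sqrt 3 / 4) ^ (p + 1)) →
        Real.sqrt (N ^ (-s) * (∑ i, a i ^ (1 / (s + 1))) ^ (s + 1)) =
          ((3 * Real.sqrt 3 / 4) / N) ^ (((p : ℝ) + 1) / 2) *
            (∑ k, η k ^ ((2 : ℝ) / ((p : ℝ) + 2))) ^ (((p : ℝ) + 2) / 2)) := by
  have hs1 : (0:ℝ) < s + 1 := by linarith
  have hs1' : s + 1 ≠ 0 := ne_of_gt hs1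
  have hne : Nonempty (Fin n) := Fin.pos_iff_nonempty.mp hn
  have hSpos : 0 < ∑ i, a i ^ (1 / (s + 1)) :=
    Finset.sum_pos (fun i _ => Real.rpow_pos_of_pos (ha i) _) Finset.univ_nonempty
  set S : ℝ := ∑ i, a i ^ (1 / (s + 1)) with hS
  refine ⟨?_, ?_, ?_⟩
  · -- Hölder lower bound
    intro d hd hsum
    have key := inner_le_weight_mul_Lp_of_nonneg (ι := Fin n) Finset.univ
      (p := s + 1) (by linarith) d (fun i => a i ^ (1 / (s + 1)) / d i)
      (fun i => (hd i).le)
      (fun i => div_nonneg (Real.rpow_nonneg (ha i).le _) (hd i).le)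
    beta_reduce at key
    have h1 : ∑ i, d i * (a i ^ (1 / (s + 1)) / d i) = S := by
      refine Finset.sum_congr rfl fun i _ => ?_
      rw [mul_comm]; exact div_mul_cancel₀ _ (hd i).ne'
    have h2 : ∑ i, d i * (a i ^ (1 / (s + 1)) / d i) ^ (s + 1)
        = ∑ i, a i * d i ^ (-s) := by
      refine Finset.sum_congr rfl fun i _ => ?_
      have hdpow : d i ^ (-s) = d i / d i ^ (s + 1) := by
        rw [eq_div_iff (ne_of_gt (Real.rpow_pos_of_pos (hd i) _)),
          ← Real.rpow_add (hd i)]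
        rw [show -s + (s + 1) = 1 by ring, Real.rpow_one]
      rw [Real.div_rpow (Real.rpow_nonneg (ha i).le _) (hd i).le, ← Real.rpow_mul (ha i).le,
        one_div, inv_mul_cancel₀ hs1', Real.rpow_one, hdpow]
      ring
    rw [h1, h2, hsum] at key
    have hE : 0 ≤ ∑ i, a i * d i ^ (-s) := by
      refine Finset.sum_nonneg fun i _ => ?_
      exact mul_nonneg (ha i).le (Real.rpow_nonneg (hd i).le _)
    have key2 := Real.rpow_le_rpow hSpos.le key hs1.le
    rw [Real.mul_rpow (by positivity) (by positivity), ← Real.rpow_mul hN.le,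
      ← Real.rpow_mul hE] at key2
    rw [show (1 - (s + 1)⁻¹) * (s + 1) = s by field_simp; ring,
      inv_mul_cancel₀ hs1', Real.rpow_one] at key2
    calc N ^ (-s) * S ^ (s + 1)
        ≤ N ^ (-s) * (N ^ s * ∑ i, a i * d i ^ (-s)) :=
          mul_le_mul_of_nonneg_left key2 (by positivity)
      _ = ∑ i, a i * d i ^ (-s) := by
          rw [← mul_assoc, ← Real.rpow_add hN, neg_add_cancel, Real.rpow_zero,
            one_mul]
  · -- equality case
    intro d hd
    have hcalc : ∀ i, a i * d i ^ (-s)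
        = N ^ (-s) * S ^ s * a i ^ (1 / (s + 1)) := by
      intro i
      rw [hd i]
      have hai := ha i
      have haipow : (0:ℝ) < a i ^ (1 / (s + 1)) := Real.rpow_pos_of_pos hai _
      rw [Real.div_rpow (by positivity) hSpos.le,
        Real.mul_rpow hN.le haipow.le, ← Real.rpow_mul hai.le]
      rw [Real.rpow_neg hSpos.le, div_eq_mul_inv, inv_inv]
      have h3 : a i * a i ^ (1 / (s + 1) * -s) = a i ^ (1 / (s + 1)) := by
        nth_rewrite 1 [← Real.rpow_one (a i)]
        rw [← Real.rpow_add hai]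
        congr 1
        field_simp
        ring
      calc a i * (N ^ (-s) * a i ^ (1 / (s + 1) * -s) * S ^ s)
          = N ^ (-s) * S ^ s * (a i * a i ^ (1 / (s + 1) * -s)) := by ring
        _ = N ^ (-s) * S ^ s * a i ^ (1 / (s + 1)) := by rw [h3]
    calc ∑ i, a i * d i ^ (-s) = ∑ i, N ^ (-s) * S ^ s * a i ^ (1 / (s + 1)) :=
          Finset.sum_congr rfl fun i _ => hcalc i
      _ = N ^ (-s) * S ^ s * S := by rw [← Finset.mul_sum]
      _ = N ^ (-s) * S ^ (s + 1) := by
          rw [Real.rpow_add_one (ne_of_gt hSpos) s, mul_assoc]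
  · -- explicit optimized error
    intro p η hη hsp hak
    have h3pos : (0:ℝ) < Real.sqrt 3 := Real.sqrt_pos.mpr (by norm_num)
    set α : ℝ := 3 * Real.sqrt 3 / 4 with hαdef
    have hα : 0 < α := by positivity
    have hp2 : (0:ℝ) < (p : ℝ) + 2 := by positivity
    have hp2' : ((p : ℝ) + 2) ≠ 0 := ne_of_gt hp2
    set T : ℝ := ∑ k, η k ^ ((2 : ℝ) / ((p : ℝ) + 2)) with hT
    have hTpos : 0 < T :=
      Finset.sum_pos (fun i _ => Real.rpow_pos_of_pos (hη i) _) Finset.univ_nonempty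
    have hs2 : s + 1 = (p : ℝ) + 2 := by rw [hsp]; ring
    -- each summand of S
    have hterm : ∀ i, a i ^ (1 / (s + 1))
        = α ^ (((p : ℝ) + 1) / ((p : ℝ) + 2)) * η i ^ ((2 : ℝ) / ((p : ℝ) + 2)) := by
      intro i
      rw [hak i, hs2]
      have h1 : (η i ^ 2 : ℝ) = η i ^ (2 : ℝ) := by
        rw [← Real.rpow_natCast (η i) 2]; norm_num
      have h2 : (α ^ (p + 1) : ℝ) = α ^ (((p : ℝ) + 1)) := by
        rw [← Real.rpow_natCast α (p + 1)]; push_cast; ring_nf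
      rw [h1, h2,
        Real.mul_rpow (Real.rpow_nonneg (hη i).le _) (Real.rpow_nonneg hα.le _),
        ← Real.rpow_mul (hη i).le, ← Real.rpow_mul hα.le]
      rw [show (2 : ℝ) * (1 / ((p : ℝ) + 2)) = 2 / ((p : ℝ) + 2) by ring,
        show ((p : ℝ) + 1) * (1 / ((p : ℝ) + 2)) = ((p : ℝ) + 1) / ((p : ℝ) + 2) by ring]
      ring
    have hSeq : S = α ^ (((p : ℝ) + 1) / ((p : ℝ) + 2)) * T := by
      rw [hS, hT, Finset.mul_sum]
      exact Finset.sum_congr rfl fun i _ => hterm i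
    set R : ℝ := (α / N) ^ (((p : ℝ) + 1) / 2) * T ^ (((p : ℝ) + 2) / 2) with hR
    have hRpos : 0 < R :=
      mul_pos (Real.rpow_pos_of_pos (div_pos hα hN) _)
        (Real.rpow_pos_of_pos hTpos _)
    have hX : N ^ (-s) * S ^ (s + 1) = R ^ 2 := by
      have hRsq : R ^ 2 = (α / N) ^ ((p : ℝ) + 1) * T ^ ((p : ℝ) + 2) := by
        rw [hR, mul_pow, ← Real.rpow_natCast ((α / N) ^ (((p : ℝ) + 1) / 2)) 2,
          ← Real.rpow_natCast (T ^ (((p : ℝ) + 2) / 2)) 2,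
          ← Real.rpow_mul (div_pos hα hN).le, ← Real.rpow_mul hTpos.le]
        norm_num
      rw [hRsq, hSeq, hs2, hsp,
        Real.mul_rpow (by positivity) hTpos.le, ← Real.rpow_mul hα.le,
        div_mul_cancel₀ _ hp2',
        Real.div_rpow hα.le hN.le, Real.rpow_neg hN.le, div_eq_mul_inv]
      ring_nf
    rw [hX, Real.sqrt_sq hRpos.le]
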